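/- Let d₀ ≥ 2 and let (t⁻, t⁺)₊ ⊂ ℝ/ℤ be an open arc of length d₀^{-ℓ} for some ℓ ≥ 1. Then the set T := { t ∈ ℝ/ℤ : τ_{d₀}^n(t) ∉ (t⁻, t⁺)₊ for all n ≥ 0 } is a nonempty closed set that is forward invariant under τ_{d₀} (i.e., τ_{d₀}(T) ⊆ T). -/
import Mathlib

/-- For `d₀ ≥ 2` and an open arc `(t⁻,t⁺)₊` of length `d₀^{-ℓ}` (`ℓ ≥ 1`), the set
`T` of angles whose forward `τ_{d₀}`-orbit avoids the arc is nonempty, closed, and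
forward invariant. -/
theorem stmt2 (d₀ : ℕ) (hd : 2 ≤ d₀) (ℓ : ℕ) (hℓ : 1 ≤ ℓ) (tm : ℝ)
    (I : Set UnitAddCircle)
    (hI : I = (fun x : ℝ => (x : UnitAddCircle)) '' Set.Ioo tm (tm + 1 / (d₀ : ℝ) ^ ℓ))
    (T : Set UnitAddCircle)
    (hT : T = {t | ∀ n : ℕ, (d₀ ^ n) • t ∉ I}) :
    T.Nonempty ∧ IsClosed T ∧ ∀ t ∈ T, d₀ • t ∈ T := by
  have hd2 : (2:ℝ) ≤ (d₀:ℝ) := by exact_mod_cast hd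
  have hd0 : (0:ℝ) < (d₀:ℝ) := by linarith
  set ε : ℝ := 1 / (d₀:ℝ) ^ ℓ with hε
  have hεpos : 0 < ε := by positivity
  have hεle : ε ≤ 1 / (d₀:ℝ) := by
    apply one_div_le_one_div_of_le hd0
    calc (d₀:ℝ) = (d₀:ℝ) ^ 1 := (pow_one _).symm
    _ ≤ (d₀:ℝ) ^ ℓ := pow_le_pow_right₀ (by linarith) hℓ
  have hdle : 1 / (d₀:ℝ) ≤ 1/2 := by
    apply one_div_le_one_div_of_le (by norm_num) hd2
  have hcoe : ∀ (n : ℕ) (x : ℝ), n • ((x : UnitAddCircle)) = ((n * x : ℝ) : UnitAddCircle) := by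
    intro n x; rw [← AddCircle.coe_nsmul]; norm_num [nsmul_eq_mul]
  have hdiff : ∀ x y : ℝ, (x : UnitAddCircle) = (y : UnitAddCircle) → ∃ k : ℤ, x - y = k := by
    intro x y h
    rw [QuotientAddGroup.eq_iff_sub_mem, AddSubgroup.mem_zmultiples_iff] at h
    obtain ⟨k, hk⟩ := h
    exact ⟨k, by simpa using hk.symm⟩
  -- every point has a preimage outside I
  have key : ∀ y : UnitAddCircle, ∃ x, x ∉ I ∧ d₀ • x = y := by
    intro y
    obtain ⟨y', rfl⟩ := QuotientAddGroup.mk_surjective y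
    set a : ℝ := y' / d₀ with ha'
    set b : ℝ := (y' + 1) / d₀ with hb'
    have ha : d₀ • ((a : ℝ) : UnitAddCircle) = (y' : UnitAddCircle) := by
      rw [hcoe]; congr 1; rw [ha']; field_simp
    have hb : d₀ • ((b : ℝ) : UnitAddCircle) = (y' : UnitAddCircle) := by
      rw [hcoe]
      have h1 : (d₀:ℝ) * b = y' + 1 := by rw [hb']; field_simp
      rw [h1, QuotientAddGroup.eq_iff_sub_mem, AddSubgroup.mem_zmultiples_iff]
      exact ⟨1, by simp⟩
    by_cases hA : ((a : ℝ) : UnitAddCircle) ∈ I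
    · refine ⟨b, fun hB => ?_, hb⟩
      rw [hI] at hA hB
      obtain ⟨u, hu, hua⟩ := hA
      obtain ⟨v, hv, hvb⟩ := hB
      obtain ⟨k, hk⟩ := hdiff u a hua
      obtain ⟨m, hm⟩ := hdiff v b hvb
      have hba : b - a = 1 / (d₀:ℝ) := by rw [hb', ha', div_sub_div_same, add_sub_cancel_left]
      simp only [Set.mem_Ioo] at hu hv
      have h1 : ((m - k : ℤ) : ℝ) = (v - u) - 1 / (d₀:ℝ) := by push_cast; linarith
      have h2 : ((m - k : ℤ) : ℝ) < 0 := by rw [h1]; linarith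
      have h3 : (-1 : ℝ) < ((m - k : ℤ) : ℝ) := by rw [h1]; linarith
      have h4 : (m - k : ℤ) < 0 := by exact_mod_cast h2
      have h5 : (-1 : ℤ) < m - k := by exact_mod_cast h3
      omega
    · exact ⟨_, hA, ha⟩
  have hIopen : IsOpen I := by
    rw [hI]; exact QuotientAddGroup.isOpenMap_coe _ isOpen_Ioo
  -- closedness
  have hTclosed : IsClosed T := by
    have hTeq : T = ⋂ n : ℕ, (fun t => (d₀ ^ n) • t) ⁻¹' Iᶜ := by
      rw [hT]; ext t; simp [Set.mem_iInter]
    rw [hTeq]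
    exact isClosed_iInter fun n => (hIopen.isClosed_compl).preimage (continuous_nsmul _)
  -- backward orbit
  choose f hf1 hf2 using key
  set x : ℕ → UnitAddCircle := fun n => f^[n + 1] 0 with hx
  have hxnot : ∀ n, x n ∉ I := by
    intro n; simp only [hx, Function.iterate_succ_apply']; exact hf1 _
  have hxstep : ∀ n, d₀ • x (n + 1) = x n := by
    intro n
    have : x (n + 1) = f (x n) := by
      simp only [hx, Function.iterate_succ_apply']
    rw [this]; exact hf2 _
  have hxpow : ∀ m n, (d₀ ^ m) • x (n + m) = x n := by
    intro m
    induction m with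
    | zero => intro n; simp
    | succ m ih =>
      intro n
      have : x (n + (m + 1)) = x ((n + 1) + m) := by ring_nf
      rw [this, pow_succ', mul_smul, ih (n+1), hxstep]
  -- nested closed nonempty sets
  set V : ℕ → Set UnitAddCircle := fun n => {t | ∀ j ≤ n, (d₀ ^ j) • t ∉ I} with hV
  have hVclosed : ∀ n, IsClosed (V n) := by
    intro n
    have : V n = ⋂ (j : ℕ) (_ : j ≤ n), (fun t => (d₀ ^ j) • t) ⁻¹' Iᶜ := by
      ext t; simp [hV]
    rw [this]
    exact isClosed_iInter fun j => isClosed_iInter fun _ =>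
      (hIopen.isClosed_compl).preimage (continuous_nsmul _)
  have hVnonempty : ∀ n, (V n).Nonempty := by
    intro n
    refine ⟨x n, fun j hj => ?_⟩
    have : n = (n - j) + j := by omega
    rw [this, hxpow]
    exact hxnot _
  have hVmono : ∀ n, V (n + 1) ⊆ V n := by
    intro n t ht j hj
    exact ht j (by omega)
  have hTne : T.Nonempty := by
    have hne : (⋂ n, V n).Nonempty :=
      IsCompact.nonempty_iInter_of_sequence_nonempty_isCompact_isClosed V hVmono hVnonempty
        ((hVclosed 0).isCompact) hVclosed
    obtain ⟨t, ht⟩ := hne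
    rw [Set.mem_iInter] at ht
    refine ⟨t, ?_⟩
    rw [hT]
    exact fun n => ht n n le_rfl
  refine ⟨hTne, hTclosed, ?_⟩
  intro t ht
  rw [hT] at ht ⊢
  intro n
  have := ht (n + 1)
  rwa [pow_succ, mul_smul] at this
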